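/- Let ρ₁, ρ₂ : (a,b) → ℝ be differentiable functions satisfying ρ₁' + ρ₁² ≤ ρ₂' + ρ₂² pointwise on (a,b). If ρ₁(t₀) ≥ ρ₂(t₀) for some t₀ ∈ (a,b), then ρ₁(t) ≥ ρ₂(t) for all t ∈ (a, t₀]. -/

import Mathlib

/-- Comparison lemma for Riccati inequalities: if `ρ₁' + ρ₁² ≤ ρ₂' + ρ₂²` on `(a,b)`
and `ρ₁ t₀ ≥ ρ₂ t₀` for some `t₀ ∈ (a,b)`, then `ρ₁ ≥ ρ₂` on `(a, t₀]`. -/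
theorem riccati_comparison
    (a b : ℝ) (ρ₁ ρ₂ ρ₁' ρ₂' : ℝ → ℝ)
    (hρ₁ : ∀ t ∈ Set.Ioo a b, HasDerivAt ρ₁ (ρ₁' t) t)
    (hρ₂ : ∀ t ∈ Set.Ioo a b, HasDerivAt ρ₂ (ρ₂' t) t)
    (hineq : ∀ t ∈ Set.Ioo a b, ρ₁' t + (ρ₁ t) ^ 2 ≤ ρ₂' t + (ρ₂ t) ^ 2)
    (t₀ : ℝ) (ht₀ : t₀ ∈ Set.Ioo a b) (h₀ : ρ₂ t₀ ≤ ρ₁ t₀) :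
    ∀ t ∈ Set.Ioc a t₀, ρ₂ t ≤ ρ₁ t := by
  intro t ht
  set f : ℝ → ℝ := fun s => ρ₁ s + ρ₂ s with hf
  have hcont : ContinuousOn f (Set.Ioo a b) := fun s hs =>
    ((hρ₁ s hs).continuousAt.add (hρ₂ s hs).continuousAt).continuousWithinAt
  set F : ℝ → ℝ := fun s => ∫ x in t₀..s, f x with hF
  have hFd : ∀ s ∈ Set.Ioo a b, HasDerivAt F (f s) s := by
    intro s hs
    have hsub : Set.uIcc t₀ s ⊆ Set.Ioo a b :=
      Set.ordConnected_Ioo.uIcc_subset ht₀ hs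
    have hint : IntervalIntegrable f MeasureTheory.volume t₀ s :=
      (hcont.mono hsub).intervalIntegrable
    exact intervalIntegral.integral_hasDerivAt_right hint
      (hcont.stronglyMeasurableAtFilter isOpen_Ioo s hs)
      ((hρ₁ s hs).continuousAt.add (hρ₂ s hs).continuousAt)
  set g : ℝ → ℝ := fun s => (ρ₁ s - ρ₂ s) * Real.exp (F s) with hg
  have hgd : ∀ s ∈ Set.Ioo a b, HasDerivAt g
      (((ρ₁' s - ρ₂' s) + (ρ₁ s - ρ₂ s) * f s) * Real.exp (F s)) s := by
    intro s hs
    have h1 : HasDerivAt (fun y => (ρ₁ y - ρ₂ y) * Real.exp (F y))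
        ((ρ₁' s - ρ₂' s) * Real.exp (F s) + (ρ₁ s - ρ₂ s) * (Real.exp (F s) * f s)) s :=
      ((hρ₁ s hs).sub (hρ₂ s hs)).mul ((hFd s hs).exp)
    convert h1 using 1
    ring
  have hIccsub : Set.Icc t t₀ ⊆ Set.Ioo a b := fun s hs =>
    ⟨lt_of_lt_of_le ht.1 hs.1, lt_of_le_of_lt hs.2 ht₀.2⟩
  have hanti : AntitoneOn g (Set.Icc t t₀) := by
    apply antitoneOn_of_deriv_nonpos (convex_Icc t t₀)
    · exact fun s hs => ((hgd s (hIccsub hs)).continuousAt).continuousWithinAt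
    · intro s hs
      rw [interior_Icc] at hs
      exact ((hgd s (hIccsub (Set.Ioo_subset_Icc_self hs))).differentiableAt).differentiableWithinAt
    · intro s hs
      rw [interior_Icc] at hs
      have hs' := hIccsub (Set.Ioo_subset_Icc_self hs)
      rw [(hgd s hs').deriv]
      have key : (ρ₁' s - ρ₂' s) + (ρ₁ s - ρ₂ s) * f s ≤ 0 := by
        have := hineq s hs'
        simp only [hf]
        nlinarith
      exact mul_nonpos_of_nonpos_of_nonneg key (Real.exp_pos _).le
  have h1 : g t₀ ≤ g t := by
    rcases eq_or_lt_of_le ht.2 with h | h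
    · rw [h]
    · exact hanti (Set.left_mem_Icc.2 ht.2) (Set.right_mem_Icc.2 ht.2) ht.2
  have h2 : 0 ≤ g t₀ := mul_nonneg (by linarith) (Real.exp_pos _).le
  have h3 : 0 ≤ (ρ₁ t - ρ₂ t) * Real.exp (F t) := le_trans h2 h1
  nlinarith [Real.exp_pos (F t)]
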